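/- Let ω_{ij} ∈ ℂ for 1 ≤ i < j ≤ 4, and consider the ℤ/2-graded algebra over ℂ on a space with homogeneous basis {e₁; f₁, f₂, f₃, f₄} (e₁ even, f_i odd) with multiplication determined by: e₁² = 0, e₁f₁ = f₁e₁ = 0, e₁f_{k+1} = f_{k+1}e₁ = f_k for k = 1, 2, 3, and f_if_j = −f_jf_i = ω_{ij}e₁ for i < j, f_i² = 0. Then for no choice of the parameters ω_{ij} is this algebra a Jordan superalgebra; indeed the Jordan superidentity fails, with J^s(e₁; e₁, e₁, f₄) = −2f₁ ≠ 0. -/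
import Mathlib


noncomputable section

/-- The underlying ℤ/2-graded vector space of type `(m,n)`: even part `Fin m → ℂ`,
odd part `Fin n → ℂ`. -/
abbrev GV (m n : ℕ) : Type := (Fin m → ℂ) × (Fin n → ℂ)

/-- A superalgebra structure tensor of type `(m,n)`: structure constants
`c i j k` (even·even), `ρ i j k` (even·odd) and `Γ i j k` (odd·odd). -/
abbrev Tensor (m n : ℕ) : Type :=
  (Fin m → Fin m → Fin m → ℂ) × (Fin m → Fin n → Fin n → ℂ) × (Fin n → Fin n → Fin m → ℂ)

/-- The ℤ/2-graded multiplication on `GV m n` determined by a structure tensor. -/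
def mulOf {m n : ℕ} (μ : Tensor m n) (x y : GV m n) : GV m n :=
  (fun k => (∑ i, ∑ j, x.1 i * y.1 j * μ.1 i j k) + ∑ i, ∑ j, x.2 i * y.2 j * μ.2.2 i j k,
   fun k => (∑ i, ∑ j, x.1 i * y.2 j * μ.2.1 i j k) + ∑ i, ∑ j, y.1 i * x.2 j * μ.2.1 i j k)

/-- `x` is homogeneous of parity `p` (`p = 0`: even, `p = 1`: odd). -/
def IsHom {m n : ℕ} (p : ℕ) (x : GV m n) : Prop :=
  (p = 0 ∧ x.2 = 0) ∨ (p = 1 ∧ x.1 = 0)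

/-- The sign `(-1)^k`. -/
def sgn (k : ℕ) : ℂ := (-1 : ℂ) ^ k

/-- The super-Jordan expression `J^s(w; x, y, z)` for homogeneous elements of
parities `pw, px, py, pz`. -/
def superJ {m n : ℕ} (μ : Tensor m n) (pw px py pz : ℕ) (w x y z : GV m n) : GV m n :=
  mulOf μ (mulOf μ w x) (mulOf μ y z)
    + sgn (px * py) • mulOf μ (mulOf μ w y) (mulOf μ x z)
    + sgn ((px + py) * pz) • mulOf μ (mulOf μ w z) (mulOf μ x y)
    - sgn (pw * px) • mulOf μ x (mulOf μ w (mulOf μ y z))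
    - sgn (py * (pw + px)) • mulOf μ y (mulOf μ w (mulOf μ x z))
    - sgn (pz * (pw + px + py)) • mulOf μ z (mulOf μ w (mulOf μ x y))

/-- `μ` is a Jordan superalgebra structure: supercommutativity and the Jordan
superidentity hold for all homogeneous elements. -/
def IsJordanSuper {m n : ℕ} (μ : Tensor m n) : Prop :=
  (∀ (px py : ℕ) (x y : GV m n), IsHom px x → IsHom py y →
      mulOf μ x y = sgn (px * py) • mulOf μ y x) ∧
  (∀ (pw px py pz : ℕ) (w x y z : GV m n),
      IsHom pw w → IsHom px x → IsHom py y → IsHom pz z →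
      superJ μ pw px py pz w x y z = 0)

/-- The product of two graded subspaces: the span of all products. -/
def mulSub {m n : ℕ} (μ : Tensor m n) (A B : Submodule ℂ (GV m n)) : Submodule ℂ (GV m n) :=
  Submodule.span ℂ {z | ∃ a ∈ A, ∃ b ∈ B, z = mulOf μ a b}

/-- The powers `J^k`: `J^1 = J` and `J^{k+1} = Σ_{i=1}^{k} J^i · J^{k+1-i}`. -/
def powT {m n : ℕ} (μ : Tensor m n) : ℕ → Submodule ℂ (GV m n)
  | 0 => ⊤
  | 1 => ⊤
  | (k + 2) => ⨆ i : Fin (k + 1), mulSub μ (powT μ ((i : ℕ) + 1)) (powT μ (k + 1 - (i : ℕ)))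
  decreasing_by
  · have := i.isLt; omega
  · omega

/-- `μ` is nilpotent: some power vanishes. -/
def IsNilpotentT {m n : ℕ} (μ : Tensor m n) : Prop :=
  ∃ k : ℕ, 1 ≤ k ∧ powT μ k = ⊥

/-- A grading-preserving algebra isomorphism between the superalgebras determined
by `μ` and `μ'`. -/
def Iso {m n : ℕ} (μ μ' : Tensor m n) : Prop :=
  ∃ (T : (Fin m → ℂ) ≃ₗ[ℂ] (Fin m → ℂ)) (S : (Fin n → ℂ) ≃ₗ[ℂ] (Fin n → ℂ)),
    ∀ x y : GV m n,
      (T ((mulOf μ x y).1), S ((mulOf μ x y).2)) = mulOf μ' (T x.1, S x.2) (T y.1, S y.2)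

/-- `μ` degenerates to `μ'`: `μ'` lies in the closure of the orbit of `μ` under
base change (in the standard topology). -/
def degenerates {m n : ℕ} (μ μ' : Tensor m n) : Prop :=
  μ' ∈ closure {ν : Tensor m n | Iso μ ν}

/-- Standard even basis vector `e_i`. -/
def eps {m n : ℕ} (i : Fin m) : GV m n := (Pi.single i 1, 0)

/-- Standard odd basis vector `f_j`. -/
def ph {m n : ℕ} (j : Fin n) : GV m n := (0, Pi.single j 1)


/-- The type (1,4) tensor with `e₁f₂ = f₁`, `e₁f₃ = f₂`, `e₁f₄ = f₃` and
`f_if_j = ω_{ij} e₁` for `i < j` (extended skew-symmetrically). -/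
def M8 (ω : Fin 4 → Fin 4 → ℂ) : Tensor 1 4 :=
  (fun _ _ _ => 0,
   fun _ => ![![0,0,0,0], ![1,0,0,0], ![0,1,0,0], ![0,0,1,0]],
   fun i j _ => if i < j then ω i j else if j < i then -ω j i else 0)

/-- The odd element `-2f₁` of `GV 1 4`. -/
def negTwoF1 : GV 1 4 := ((0 : Fin 1 → ℂ), (-2 : ℂ) • (Pi.single (0 : Fin 4) (1 : ℂ) : Fin 4 → ℂ))

/-- for no choice of the parameters `ω_{ij}` is `M8 ω` a Jordan
superalgebra; indeed `J^s(e₁; e₁, e₁, f₄) = -2f₁ ≠ 0`. -/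
theorem stmt8 (ω : Fin 4 → Fin 4 → ℂ) :
    superJ (M8 ω) 0 0 0 1 (eps 0) (eps 0) (eps 0) (ph 3) = negTwoF1 ∧
      negTwoF1 ≠ (0 : GV 1 4) ∧
      ¬ IsJordanSuper (M8 ω) := by
  have h1 : superJ (M8 ω) 0 0 0 1 (eps 0) (eps 0) (eps 0) (ph 3) = negTwoF1 := by
    refine Prod.ext ?_ ?_ <;> funext k <;> fin_cases k <;>
      simp [superJ, mulOf, M8, eps, ph, sgn, negTwoF1, Fin.sum_univ_succ,
        Pi.single_apply, Prod.ext_iff, funext_iff, Fin.forall_fin_succ, Matrix.vecHead, Matrix.vecTail] <;> ring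
  have h2 : negTwoF1 ≠ (0 : GV 1 4) := by
    intro h
    have := congrArg (fun p : GV 1 4 => p.2 0) h
    norm_num [negTwoF1, Pi.single_apply] at this
  refine ⟨h1, h2, ?_⟩
  rintro ⟨_, hJ⟩
  have he : IsHom 0 (eps 0 : GV 1 4) := Or.inl ⟨rfl, rfl⟩
  have hf : IsHom 1 (ph 3 : GV 1 4) := Or.inr ⟨rfl, rfl⟩
  have := hJ 0 0 0 1 (eps 0) (eps 0) (eps 0) (ph 3) he he he hf
  rw [h1] at this
  exact h2 this

end
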